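/- Let w be a string in the letters {1',1,2',2} and consider its lattice walk beginning at an arbitrary starting point (x_0,y_0) in ℕ×ℕ. If the starting point is shifted by (−1,0) or by (0,1) (so that the whole walk remains in ℕ×ℕ), then the endpoint of the walk shifts by either (−1,0) or (0,1). Similarly, if the starting point is shifted by (1,0) or by (0,−1), then the endpoint shifts by either (1,0) or (0,−1). -/
import Mathlib


/-! ## Words over the shifted alphabet {1' < 1 < 2' < 2 < ...}

A letter is a pair `(i, b)` where `i ≥ 1` is the value (family) of the letter
and `b = true` means the letter is primed (`i'`), `b = false` means it is
unprimed (`i`). -/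

/-- A letter `i` or `i'`: the pair `(i, primed?)`. -/
abbrev Letter := ℕ × Bool

/-- A string: a finite sequence of letters. -/
abbrev Str := List Letter

/-- Number of occurrences of the letter `x` in the string `w`. -/
def cnt (x : Letter) (w : Str) : ℕ := w.countP (fun a => decide (a = x))

/-- The canonical form of a string: the leftmost letter of each value `i`
(primed or not) is made unprimed. -/
def canonicalize (w : Str) : Str :=
  w.mapIdx fun k a =>
    if k = w.findIdx (fun b => decide (b.1 = a.1)) then (a.1, false) else a

/-- `v` is a representative of (the word of) `w`: they have the same canonical
form. -/
def Represents (v w : Str) : Prop := canonicalize v = canonicalize w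

/-- Stembridge's statistic `m_i(j)`, for `1 ≤ j ≤ 2n` (1-indexed `j`). -/
def mStat (w : Str) (i j : ℕ) : ℕ :=
  if j ≤ w.length then cnt (i, false) (w.drop (w.length - j))
  else cnt (i, false) w + cnt (i, true) (w.take (j - w.length))

/-- Stembridge's ballotness criterion for a word (a string in canonical form).
Positions of letters are 0-indexed via `w[·]?`, whereas `j` is as in Stembridge's
1-indexed formulation: condition S1 concerns the letter `w_{n-j}` (1-indexed),
i.e. `w[n-j-1]?`, and S2 concerns `w_{j-n+1}`, i.e. `w[j-n]?`. -/
def IsBallot (w : Str) : Prop :=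
  ∀ i, 1 ≤ i → ∀ j,
    ((1 ≤ j ∧ j < w.length ∧ mStat w i j = mStat w (i + 1) j) →
      w[w.length - j - 1]? ≠ some (i + 1, false) ∧
      w[w.length - j - 1]? ≠ some (i + 1, true)) ∧
    ((w.length ≤ j ∧ j ≤ 2 * w.length ∧ mStat w i j = mStat w (i + 1) j) →
      w[j - w.length]? ≠ some (i, false) ∧
      w[j - w.length]? ≠ some (i + 1, true))

/-! ## Lattice walks for strings in the letters {1', 1, 2', 2} -/

/-- One step of the lattice walk determined by a letter, from the point `p`.
(Here the letter values are `1` and `2`, i.e. this is for the relabelled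
subword in the letters `1', 1, 2', 2`.) -/
def walkStep (p : ℤ × ℤ) (a : Letter) : ℤ × ℤ :=
  if p.1 = 0 ∨ p.2 = 0 then
    if a.1 = 1 then (p.1 + 1, p.2) else (p.1, p.2 + 1)
  else
    if a.1 = 1 then (if a.2 then (p.1 + 1, p.2) else (p.1, p.2 - 1))
    else (if a.2 then (p.1 - 1, p.2) else (p.1, p.2 + 1))

/-- Endpoint of the lattice walk of `w` starting at `p`. -/
def walkEnd (p : ℤ × ℤ) (w : Str) : ℤ × ℤ := w.foldl walkStep p

/-- The full list of points of the lattice walk of `w` starting at `p`. -/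
def walkPoints (p : ℤ × ℤ) (w : Str) : List (ℤ × ℤ) := List.scanl walkStep p w

/-- The location of the walk of `v` (started at the origin) just before the
(0-indexed) position `k`. -/
def locAt (v : Str) (k : ℕ) : ℤ × ℤ := walkEnd ((0, 0) : ℤ × ℤ) (v.take k)

/-! ## F- and E-critical substrings -/

/-- The five types of critical substrings (1F/2F/3F/4F/5F, resp. 1E/…/5E). -/
inductive FType | t1 | t2 | t3 | t4 | t5
  deriving DecidableEq

/-- `FCriticalAt v k l ty`: positions `k ≤ l` (0-indexed) of the string `v`
form an F-critical substring of type `ty`.  The location conditions are on the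
walk point just before position `k` of `v`'s walk from the origin; the step
directions recorded in the defining table are automatic consequences of the
location conditions and are therefore omitted. -/
def FCriticalAt (v : Str) (k l : ℕ) (ty : FType) : Prop :=
  l < v.length ∧
  match ty with
  | FType.t1 =>
      k < l ∧ v[k]? = some (1, false) ∧
      (∀ m, k < m → m < l → v[m]? = some (1, true)) ∧
      v[l]? = some (2, true) ∧
      ((locAt v k).2 = 0 ∨ ((locAt v k).2 = 1 ∧ 1 ≤ (locAt v k).1))
  | FType.t2 =>
      k < l ∧ v[k]? = some (1, false) ∧
      (∀ m, k < m → m < l → v[m]? = some (2, false)) ∧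
      v[l]? = some (1, true) ∧
      ((locAt v k).1 = 0 ∨ ((locAt v k).1 = 1 ∧ 1 ≤ (locAt v k).2))
  | FType.t3 => k = l ∧ v[k]? = some (1, false) ∧ (locAt v k).2 = 0
  | FType.t4 => k = l ∧ v[k]? = some (1, true) ∧ (locAt v k).1 = 0
  | FType.t5 =>
      k = l ∧ (v[k]? = some (1, false) ∨ v[k]? = some (2, true)) ∧
      (locAt v k).1 = 1 ∧ 1 ≤ (locAt v k).2

/-- The transformation applied to an F-critical substring of type `ty` at
positions `k ≤ l`. -/
def FTransform (v : Str) (k l : ℕ) (ty : FType) : Str :=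
  match ty with
  | FType.t1 => (v.set k (2, true)).set l (2, false)
  | FType.t2 => (v.set k (2, true)).set l (1, false)
  | FType.t3 => v.set k (2, false)
  | FType.t4 => v.set k (2, true)
  | FType.t5 => v

/-- `ECriticalAt v k l ty`: positions `k ≤ l` of `v` form an E-critical
substring of type `ty` (types 1E–5E). -/
def ECriticalAt (v : Str) (k l : ℕ) (ty : FType) : Prop :=
  l < v.length ∧
  match ty with
  | FType.t1 =>
      k < l ∧ v[k]? = some (2, true) ∧
      (∀ m, k < m → m < l → v[m]? = some (2, false)) ∧
      v[l]? = some (1, false) ∧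
      ((locAt v k).1 = 0 ∨ ((locAt v k).1 = 1 ∧ 1 ≤ (locAt v k).2))
  | FType.t2 =>
      k < l ∧ v[k]? = some (2, true) ∧
      (∀ m, k < m → m < l → v[m]? = some (1, true)) ∧
      v[l]? = some (2, false) ∧
      ((locAt v k).2 = 0 ∨ ((locAt v k).2 = 1 ∧ 1 ≤ (locAt v k).1))
  | FType.t3 => k = l ∧ v[k]? = some (2, true) ∧ (locAt v k).1 = 0
  | FType.t4 => k = l ∧ v[k]? = some (2, false) ∧ (locAt v k).2 = 0
  | FType.t5 =>
      k = l ∧ (v[k]? = some (1, false) ∨ v[k]? = some (2, true)) ∧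
      (locAt v k).2 = 1 ∧ 1 ≤ (locAt v k).1

/-- The transformation applied to an E-critical substring of type `ty`. -/
def ETransform (v : Str) (k l : ℕ) (ty : FType) : Str :=
  match ty with
  | FType.t1 => (v.set k (1, false)).set l (1, true)
  | FType.t2 => (v.set k (1, false)).set l (2, true)
  | FType.t3 => v.set k (1, true)
  | FType.t4 => v.set k (1, false)
  | FType.t5 => v

/-! ## Subwords in the letters {i', i, (i+1)', i+1} -/

/-- The subword of `w` in the letters `i', i, (i+1)', (i+1)`, relabelled so
that `i` plays the role of `1` and `i+1` of `2`. -/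
def iSub (i : ℕ) (w : Str) : Str :=
  (w.filter fun a => decide (a.1 = i ∨ a.1 = i + 1)).map
    fun a => ((if a.1 = i then 1 else 2), a.2)

/-- The (0-indexed) positions of `w` holding letters of value `i` or `i+1`,
in increasing order. -/
def iIndices (i : ℕ) (w : Str) : List ℕ :=
  (List.range w.length).filter fun k =>
    match w[k]? with
    | some a => decide (a.1 = i ∨ a.1 = i + 1)
    | none => false

/-- The position in the subword `iSub i w` corresponding to position `p` of
`w` (where `w[p]?` has value `i` or `i+1`). -/
def subPos (i : ℕ) (w : Str) (p : ℕ) : ℕ := (iIndices i w).findIdx (fun x => x == p)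

/-- `w` is `i`-ballot: its `{i',i,(i+1)',(i+1)}`-subword is ballot. -/
def IBallot (i : ℕ) (w : Str) : Prop := IsBallot (canonicalize (iSub i w))

/-- The entry of `w` at position `p` is `i`-removable: deleting it yields an
`i`-ballot word. -/
def IRemovable (i : ℕ) (w : Str) (p : ℕ) : Prop := IBallot i (w.eraseIdx p)

/-- The entry of `w` at position `p` is removable: deleting it yields a ballot
word. -/
def Removable (w : Str) (p : ℕ) : Prop := IsBallot (canonicalize (w.eraseIdx p))

/-- `FinalFCrit i w v k l ty`: `v` is a representative of the
`{i',i,(i+1)',(i+1)}`-subword of `w`, positions `k ≤ l` of `v` form an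
F-critical substring of type `ty`, and its ending index `l` is maximal among
all F-critical substrings of all representatives (i.e. it is the final
F_i-critical substring of `w`). -/
def FinalFCrit (i : ℕ) (w v : Str) (k l : ℕ) (ty : FType) : Prop :=
  Represents v (iSub i w) ∧ FCriticalAt v k l ty ∧
  ∀ v' k' l' ty', Represents v' (iSub i w) → FCriticalAt v' k' l' ty' → l' ≤ l

/-- `F_i(w)` is defined: there is a final F_i-critical substring, of type
other than 5F. -/
def FiDefined (i : ℕ) (w : Str) : Prop :=
  ∃ v k l ty, FinalFCrit i w v k l ty ∧ ty ≠ FType.t5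

/-- Replace the `{i',i,(i+1)',(i+1)}`-subword of `w` by the string `s` (in
letters `1, 2`, relabelled back to `i, i+1`), leaving all other letters
unchanged. -/
def reinsert (i : ℕ) (w : Str) (s : Str) : Str :=
  w.mapIdx fun p a =>
    if a.1 = i ∨ a.1 = i + 1 then
      match s[subPos i w p]? with
      | some b => ((if b.1 = 1 then i else i + 1), b.2)
      | none => a
    else a

/-- `FinalECrit s v k l ty`: the analogue of `FinalFCrit` for E-critical
substrings, for a string `s` in letters `1,2`. -/
def FinalECrit (s v : Str) (k l : ℕ) (ty : FType) : Prop :=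
  Represents v s ∧ ECriticalAt v k l ty ∧
  ∀ v' k' l' ty', Represents v' s → ECriticalAt v' k' l' ty' → l' ≤ l

/-- `E_i(w)` is defined. -/
def EiDefined (i : ℕ) (w : Str) : Prop :=
  ∃ v k l ty, FinalECrit (iSub i w) v k l ty ∧ ty ≠ FType.t5

/-! ## Standardization order -/

/-- Encoding of a letter respecting the order `1' < 1 < 2' < 2 < ⋯`. -/
def encL (a : Letter) : ℕ := 2 * a.1 - (if a.2 then 1 else 0)

/-- `stdLE w k l`: position `k` of `w` weakly precedes position `l` in
standardization order (ties among equal unprimed letters broken left to right,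
among equal primed letters right to left). -/
def stdLE (w : Str) (k l : ℕ) : Prop :=
  k = l ∨
  match w[k]?, w[l]? with
  | some a, some b =>
      encL a < encL b ∨
      (a = b ∧ ((a.2 = false ∧ k < l) ∨ (a.2 = true ∧ l < k)))
  | _, _ => False

/-- Strict standardization order. -/
def stdLT (w : Str) (k l : ℕ) : Prop := stdLE w k l ∧ k ≠ l

/-- Positions `k`, `l` are adjacent (in this order) in standardization order:
no position of `w` lies strictly between them. -/
def stdAdjacent (w : Str) (k l : ℕ) : Prop :=
  stdLT w k l ∧ ∀ m, m < w.length → ¬(stdLT w k m ∧ stdLT w m l)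

/-- Positions `k` and `l` are consecutive in standardization order. -/
def StdConsecutive (w : Str) (k l : ℕ) : Prop := stdAdjacent w k l ∨ stdAdjacent w l k

open Classical in
/-- The (subword) position of the lower break point of an `i`-ballot word,
given the final F_i-critical substring at positions `k ≤ l` of the subword
representative `v`, of type `ty`: it is `w_a` (position `k`) if `ty = 2F` and
`w_a` is adjacent in standardization order to `w_j`, and `w_j` otherwise
(`w_j` being the first letter for types 1F/3F and the last for 2F/4F). -/
noncomputable def lowerBreakPos (v : Str) (k l : ℕ) (ty : FType) : ℕ :=
  if ty = FType.t2 ∧ StdConsecutive v k l then k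
  else if ty = FType.t1 ∨ ty = FType.t3 then k else l

open Classical in
/-- The (subword) position of the upper break point of `v = F_i(w)`, given
the final F_i-critical substring of `w` at positions `k ≤ l`, of type `ty`,
and `t` the transformed subword representative: it is `v_a` (position `k`) if
`ty = 1F` and `v_a` is adjacent in standardization order to `v_j`, and `v_j`
otherwise (`v_j` being the last letter for types 1F/3F and the first for
2F/4F). -/
noncomputable def upperBreakPos (t : Str) (k l : ℕ) (ty : FType) : ℕ :=
  if ty = FType.t1 ∧ StdConsecutive t k l then k
  else if ty = FType.t1 ∨ ty = FType.t3 then l else k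

/-! ## The coplactic operators E' and F' via standardization -/

/-- Two strings have the same standardization. -/
def SameStd (w v : Str) : Prop :=
  w.length = v.length ∧ ∀ k l, stdLE w k l ↔ stdLE v k l

/-- Number of letters of `w` of value (gene family) `i`, primed or not. -/
def famCount (i : ℕ) (w : Str) : ℕ := w.countP fun a => decide (a.1 = i)

/-- `EPrimeSpec w v`: `v` is a word (in the letters `1',1,2',2`) with the same
standardization as `w` and weight `wt(w) + (1,-1)`; i.e. `v = E'(w)`. -/
def EPrimeSpec (w v : Str) : Prop :=
  canonicalize v = v ∧ (∀ a ∈ v, a.1 = 1 ∨ a.1 = 2) ∧ SameStd w v ∧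
  famCount 1 v = famCount 1 w + 1 ∧ famCount 2 w = famCount 2 v + 1

/-- `FPrimeSpec w v`: `v` is a word (in the letters `1',1,2',2`) with the same
standardization as `w` and weight `wt(w) - (1,-1)`; i.e. `v = F'(w)`. -/
def FPrimeSpec (w v : Str) : Prop :=
  canonicalize v = v ∧ (∀ a ∈ v, a.1 = 1 ∨ a.1 = 2) ∧ SameStd w v ∧
  famCount 1 w = famCount 1 v + 1 ∧ famCount 2 v = famCount 2 w + 1

/-- `E_i'(w)` is defined. -/
def EiPrimeDefined (i : ℕ) (w : Str) : Prop :=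
  ∃ v, EPrimeSpec (canonicalize (iSub i w)) v

/-- `u = F(w)` for words in the letters `1',1,2',2`: some representative of
`w` carries the final F-critical substring, of type other than 5F, and `u` is
the canonical form of the result of transforming it. -/
def FRel (w u : Str) : Prop :=
  ∃ v k l ty, Represents v w ∧ FCriticalAt v k l ty ∧
    (∀ v' k' l' ty', Represents v' w → FCriticalAt v' k' l' ty' → l' ≤ l) ∧
    ty ≠ FType.t5 ∧ u = canonicalize (FTransform v k l ty)

/-- `u = E(w)` for words in the letters `1',1,2',2`. -/
def ERel (w u : Str) : Prop :=
  ∃ v k l ty, Represents v w ∧ ECriticalAt v k l ty ∧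
    (∀ v' k' l' ty', Represents v' w → ECriticalAt v' k' l' ty' → l' ≤ l) ∧
    ty ≠ FType.t5 ∧ u = canonicalize (ETransform v k l ty)

/-- All points of the lattice walk of `w` starting at `p` lie in ℕ×ℕ (the
first quadrant). -/
def WalkInFirstQuadrant (p : ℤ × ℤ) (w : Str) : Prop :=
  ∀ q ∈ walkPoints p w, 0 ≤ q.1 ∧ 0 ≤ q.2

/-- **Bounded error.** Let `w` be a string in the letters
`{1',1,2',2}` and consider its lattice walk beginning at an arbitrary starting
point `(x₀,y₀) ∈ ℕ×ℕ`.  If the starting point is shifted by `(-1,0)` or by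
`(0,1)` (so that the whole walk remains in ℕ×ℕ), then the endpoint of the walk
shifts by either `(-1,0)` or `(0,1)`.  Similarly, if the starting point is
shifted by `(1,0)` or `(0,-1)`, then the endpoint shifts by either `(1,0)` or
`(0,-1)`. -/

private lemma be_step (p p' : ℤ × ℤ) (a : Letter) (ha : a.1 = 1 ∨ a.1 = 2)
    (hp : 0 ≤ p.1 ∧ 0 ≤ p.2) (hp' : 0 ≤ p'.1 ∧ 0 ≤ p'.2)
    (h : p' = p + ((-1, 0) : ℤ × ℤ) ∨ p' = p + ((0, 1) : ℤ × ℤ)) :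
    walkStep p' a = walkStep p a + ((-1, 0) : ℤ × ℤ) ∨
    walkStep p' a = walkStep p a + ((0, 1) : ℤ × ℤ) := by
  obtain ⟨x, y⟩ := p
  obtain ⟨x', y'⟩ := p'
  obtain ⟨i, b⟩ := a
  simp only [Prod.ext_iff, Prod.mk_add_mk] at h ⊢
  simp only [walkStep] at *
  cases b <;> rcases ha with ha | ha <;> simp only [ha] at * <;>
    split_ifs <;> simp_all [Prod.ext_iff] <;> omega

private lemma be_main (w : Str) (hletters : ∀ a ∈ w, a.1 = 1 ∨ a.1 = 2) :
    ∀ p p' : ℤ × ℤ, WalkInFirstQuadrant p w → WalkInFirstQuadrant p' w →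
    (p' = p + ((-1, 0) : ℤ × ℤ) ∨ p' = p + ((0, 1) : ℤ × ℤ)) →
    (walkEnd p' w = walkEnd p w + ((-1, 0) : ℤ × ℤ) ∨
     walkEnd p' w = walkEnd p w + ((0, 1) : ℤ × ℤ)) := by
  induction w with
  | nil => intro p p' _ _ h; simpa [walkEnd] using h
  | cons a w ih =>
    intro p p' hp hp' h
    have hpq : 0 ≤ p.1 ∧ 0 ≤ p.2 := hp p (by simp [walkPoints, List.scanl])
    have hpq' : 0 ≤ p'.1 ∧ 0 ≤ p'.2 := hp' p' (by simp [walkPoints, List.scanl])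
    have ha : a.1 = 1 ∨ a.1 = 2 := hletters a (by simp)
    have htail : WalkInFirstQuadrant (walkStep p a) w := by
      intro q hq; exact hp q (by simp [walkPoints, List.scanl] at hq ⊢; tauto)
    have htail' : WalkInFirstQuadrant (walkStep p' a) w := by
      intro q hq; exact hp' q (by simp [walkPoints, List.scanl] at hq ⊢; tauto)
    have hstep := be_step p p' a ha hpq hpq' h
    have : walkEnd p (a :: w) = walkEnd (walkStep p a) w := rfl
    rw [this]
    have : walkEnd p' (a :: w) = walkEnd (walkStep p' a) w := rfl
    rw [this]
    exact ih (fun b hb => hletters b (List.mem_cons_of_mem a hb))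
      (walkStep p a) (walkStep p' a) htail htail' hstep

theorem bounded_error (w : Str) (hletters : ∀ a ∈ w, a.1 = 1 ∨ a.1 = 2)
    (p p' : ℤ × ℤ)
    (hp : WalkInFirstQuadrant p w) (hp' : WalkInFirstQuadrant p' w) :
    ((p' = p + ((-1, 0) : ℤ × ℤ) ∨ p' = p + ((0, 1) : ℤ × ℤ)) →
      (walkEnd p' w = walkEnd p w + ((-1, 0) : ℤ × ℤ) ∨
       walkEnd p' w = walkEnd p w + ((0, 1) : ℤ × ℤ))) ∧
    ((p' = p + ((1, 0) : ℤ × ℤ) ∨ p' = p + ((0, -1) : ℤ × ℤ)) →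
      (walkEnd p' w = walkEnd p w + ((1, 0) : ℤ × ℤ) ∨
       walkEnd p' w = walkEnd p w + ((0, -1) : ℤ × ℤ))) := by
  constructor
  · exact be_main w hletters p p' hp hp'
  · intro h
    have h' : p = p' + ((-1, 0) : ℤ × ℤ) ∨ p = p' + ((0, 1) : ℤ × ℤ) := by
      obtain ⟨x, y⟩ := p; obtain ⟨x', y'⟩ := p'
      simp only [Prod.ext_iff, Prod.mk_add_mk] at h ⊢; omega
    have := be_main w hletters p' p hp' hp h'
    rcases this with hh | hh
    · left; rw [hh]; obtain ⟨x, y⟩ := walkEnd p' w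
      simp only [Prod.ext_iff, Prod.mk_add_mk]; omega
    · right; rw [hh]; obtain ⟨x, y⟩ := walkEnd p' w
      simp only [Prod.ext_iff, Prod.mk_add_mk]; omega
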